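/- For a hypergraph E, the following are equivalent: (1) every countable subhypergraph of E has a minimal cover; (2) every non-empty subhypergraph of E has a maximal edge; (3) no subhypergraph of E is isomorphic to the hypergraph ω. -/

import Mathlib

/-- `C` is a cover of the hypergraph `E`. -/
def IsCover {α : Type*} (E C : Set (Set α)) : Prop :=
  C ⊆ E ∧ ⋃₀ C = ⋃₀ E

/-- `C` is a minimal cover of the hypergraph `E`. -/
def IsMinimalCover {α : Type*} (E C : Set (Set α)) : Prop :=
  IsCover E C ∧ ∀ D ⊆ C, IsCover E D → D = C

/-- `S` is a subhypergraph of `E`. -/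
def IsSubhypergraph {α : Type*} (E S : Set (Set α)) : Prop :=
  ∃ F ⊆ E, ∃ A ⊆ ⋃₀ F, S = (fun T => T ∩ A) '' F

/-- `S` has a maximal edge. -/
def HasMaximalEdge {α : Type*} (S : Set (Set α)) : Prop :=
  ∃ M ∈ S, ∀ T ∈ S, M ⊆ T → T = M

/-- `S` is isomorphic to the hypergraph ω, whose vertex set is ℕ and whose
edges are the initial segments `{0, …, n-1}` for `n : ℕ`. -/
def IsoToOmega {α : Type*} (S : Set (Set α)) : Prop :=
  ∃ f : ℕ → α, Function.Injective f ∧ Set.range f = ⋃₀ S ∧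
    S = {T | ∃ n : ℕ, T = f '' Set.Iio n}

section Aux
variable {α : Type*}

/-- From a "nested pattern" of edges of `E` we get a subhypergraph isomorphic to ω. -/
lemma iso_of_pattern (E : Set (Set α)) (g : ℕ → Set α) (hg : ∀ l, g l ∈ E)
    (x : ℕ → α) (hx : ∀ j l, x j ∈ g l ↔ j < l) :
    ∃ S, IsSubhypergraph E S ∧ IsoToOmega S := by
  have hne : ∀ a b : ℕ, a < b → x a ≠ x b := by
    intro a b h heq
    have h1 : x a ∈ g b := (hx a b).2 h
    rw [heq] at h1
    exact absurd ((hx b b).1 h1) (lt_irrefl b)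
  refine ⟨(fun T => T ∩ Set.range x) '' Set.range g, ⟨Set.range g, ?_, Set.range x, ?_, rfl⟩, ?_⟩
  · rintro _ ⟨l, rfl⟩; exact hg l
  · rintro _ ⟨j, rfl⟩
    exact ⟨g (j+1), ⟨j+1, rfl⟩, (hx j (j+1)).2 (Nat.lt_succ_self j)⟩
  · have himg : ∀ l, g l ∩ Set.range x = x '' Set.Iio l := by
      intro l
      ext z
      constructor
      · rintro ⟨hzg, j, rfl⟩
        exact ⟨j, (hx j l).1 hzg, rfl⟩
      · rintro ⟨j, hj, rfl⟩
        exact ⟨(hx j l).2 hj, ⟨j, rfl⟩⟩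
    refine ⟨x, ?_, ?_, ?_⟩
    · intro a b hab
      rcases lt_trichotomy a b with h | h | h
      · exact absurd hab (hne a b h)
      · exact h
      · exact absurd hab.symm (hne b a h)
    · apply Set.Subset.antisymm
      · rintro _ ⟨j, rfl⟩
        exact ⟨g (j+1) ∩ Set.range x, ⟨g (j+1), ⟨j+1, rfl⟩, rfl⟩,
          ⟨(hx j (j+1)).2 (Nat.lt_succ_self j), ⟨j, rfl⟩⟩⟩
      · rintro z ⟨_, ⟨_, ⟨l, rfl⟩, rfl⟩, hz⟩
        exact hz.2
    · apply Set.Subset.antisymm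
      · rintro _ ⟨_, ⟨l, rfl⟩, rfl⟩
        exact ⟨l, himg l⟩
      · rintro T ⟨n, rfl⟩
        exact ⟨g n, ⟨n, rfl⟩, himg n⟩

/-- If no subhypergraph of `E` is isomorphic to ω, then there is no nested pattern
with edges from a subhypergraph `S` of `E`. -/
lemma no_nested (E S : Set (Set α)) (hsub : IsSubhypergraph E S)
    (h3 : ∀ S', IsSubhypergraph E S' → ¬ IsoToOmega S')
    (e : ℕ → Set α) (he : ∀ l, e l ∈ S) (y : ℕ → α)
    (hy : ∀ k l, y k ∈ e l ↔ k ≤ l) : False := by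
  obtain ⟨G, hGE, A₀, hA₀, hSeq⟩ := hsub
  have hch : ∀ l, ∃ g ∈ G, g ∩ A₀ = e l := by
    intro l
    have := he l
    rw [hSeq] at this
    obtain ⟨g, hg, hge⟩ := this
    exact ⟨g, hg, hge⟩
  choose g hgG hge using hch
  have hyA : ∀ k, y k ∈ A₀ := by
    intro k
    have : y k ∈ e k := (hy k k).2 le_rfl
    rw [← hge k] at this
    exact this.2
  have hx : ∀ j l, y (j+1) ∈ g l ↔ j < l := by
    intro j l
    constructor
    · intro h
      have : y (j+1) ∈ e l := by rw [← hge l]; exact ⟨h, hyA _⟩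
      exact Nat.lt_of_succ_le ((hy (j+1) l).1 this)
    · intro h
      have : y (j+1) ∈ e l := (hy (j+1) l).2 (Nat.succ_le_of_lt h)
      rw [← hge l] at this
      exact this.1
  obtain ⟨S', hS'sub, hS'iso⟩ := iso_of_pattern E g (fun l => hGE (hgG l)) (fun j => y (j+1)) hx
  exact h3 S' hS'sub hS'iso

end Aux

section Move
variable {α : Type*}

/-- Key lemma: in a state `(F, R)` we can always find a legal move covering `w`. -/
lemma exists_move (E S : Set (Set α)) (hsub : IsSubhypergraph E S)
    (h3 : ∀ S', IsSubhypergraph E S' → ¬ IsoToOmega S')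
    (F R : Set (Set α)) (hR : R ⊆ S) (w : α) (hw : ∃ r ∈ R, w ∈ r) (hwF : w ∉ ⋃₀ F) :
    ∃ e ∈ R, w ∈ e ∧ ∃ x ∈ e, x ∉ ⋃₀ F ∧
      ⋃₀ {r | r ∈ R ∧ x ∈ r ∧ r ≠ e} ⊆ (⋃₀ F ∪ e) ∪ ⋃₀ {r | r ∈ R ∧ x ∉ r ∧ r ≠ e} := by
  by_contra hcon
  push_neg at hcon
  -- hcon : ∀ e ∈ R, w ∈ e → ∀ x ∈ e, x ∉ ⋃₀ F → ¬ (...)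
  classical
  set Good : α × Set α → Prop := fun p =>
    p.2 ∈ R ∧ p.1 ∈ p.2 ∧ p.1 ∉ ⋃₀ F ∧ ∀ r ∈ R, p.1 ∈ r → w ∈ r with hGood
  have hstep : ∀ p : {p : α × Set α // Good p}, ∃ q : {q : α × Set α // Good q},
      q.1.1 ∉ p.1.2 ∧ ∀ r ∈ R, q.1.1 ∈ r → p.1.1 ∈ r := by
    rintro ⟨⟨yy, e⟩, heR, hye, hyF, hyw⟩
    have hwe : w ∈ e := hyw e heR hye
    have hnsub := hcon e heR hwe yy hye hyF
    rw [Set.not_subset] at hnsub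
    obtain ⟨z, hzD, hzR⟩ := hnsub
    obtain ⟨r, ⟨hrR, hyr, hrne⟩, hzr⟩ := hzD
    have hz1 : z ∉ ⋃₀ F := fun h => hzR (Or.inl (Or.inl h))
    have hz2 : z ∉ e := fun h => hzR (Or.inl (Or.inr h))
    have hz3 : z ∉ ⋃₀ {r | r ∈ R ∧ yy ∉ r ∧ r ≠ e} := fun h => hzR (Or.inr h)
    have hkey : ∀ r' ∈ R, z ∈ r' → yy ∈ r' := by
      intro r' hr' hzr'
      by_contra hyr'
      rcases eq_or_ne r' e with rfl | hne
      · exact hz2 hzr'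
      · exact hz3 ⟨r', ⟨hr', hyr', hne⟩, hzr'⟩
    refine ⟨⟨⟨z, r⟩, hrR, hzr, hz1, ?_⟩, hz2, hkey⟩
    intro r' hr' hzr'
    exact hyw r' hr' (hkey r' hr' hzr')
  obtain ⟨r0, hr0, hwr0⟩ := hw
  have hgood0 : Good (w, r0) := ⟨hr0, hwr0, hwF, fun r _ h => h⟩
  let t0 : {p : α × Set α // Good p} := ⟨(w, r0), hgood0⟩
  let next : {p : α × Set α // Good p} → {p : α × Set α // Good p} :=
    fun t => (hstep t).choose
  let seq : ℕ → {p : α × Set α // Good p} := fun n => next^[n] t0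
  have hseq : ∀ n, seq (n+1) = next (seq n) := fun n =>
    Function.iterate_succ_apply' next n t0
  set y : ℕ → α := fun n => (seq n).1.1 with hydef
  set e : ℕ → Set α := fun n => (seq n).1.2 with hedef
  have hgood : ∀ n, Good ((seq n).1) := fun n => (seq n).2
  have hrel : ∀ n, y (n+1) ∉ e n ∧ ∀ r ∈ R, y (n+1) ∈ r → y n ∈ r := by
    intro n
    have h := (hstep (seq n)).choose_spec
    have : seq (n+1) = (hstep (seq n)).choose := hseq n
    constructor
    · rw [hydef]; simp only; rw [this]; exact h.1
    · intro r hr hm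
      have hm' : ((hstep (seq n)).choose).1.1 ∈ r := by rw [← this]; exact hm
      exact h.2 r hr hm'
  -- descent lemma
  have desc : ∀ r ∈ R, ∀ k, y k ∈ r → ∀ j, j ≤ k → y j ∈ r := by
    intro r hr k
    induction k with
    | zero => intro h j hj; rw [Nat.le_zero.1 hj]; exact h
    | succ k ih =>
      intro h j hj
      rcases eq_or_lt_of_le hj with rfl | h'
      · exact h
      · exact ih ((hrel k).2 r hr h) j (Nat.lt_succ_iff.1 h')
  have hpat : ∀ k l, y k ∈ e l ↔ k ≤ l := by
    intro k l
    constructor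
    · intro hm
      by_contra hkl
      have hk : l + 1 ≤ k := Nat.succ_le_of_lt (Nat.lt_of_not_le hkl)
      have := desc (e l) (hgood l).1 k hm (l+1) hk
      exact (hrel l).1 this
    · intro hkl
      exact desc (e l) (hgood l).1 l (hgood l).2.1 k hkl
  exact no_nested E S hsub h3 e (fun l => hR (hgood l).1) y hpat

end Move

section Main
variable {α : Type*}

lemma three_to_one (E : Set (Set α)) (h3 : ∀ S, IsSubhypergraph E S → ¬ IsoToOmega S)
    (S : Set (Set α)) (hsub : IsSubhypergraph E S) (hVc : (⋃₀ S).Countable) :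
    ∃ C, IsMinimalCover S C := by
  classical
  by_cases hV : ⋃₀ S = ∅
  · refine ⟨∅, ⟨⟨Set.empty_subset S, by rw [Set.sUnion_empty, hV]⟩, ?_⟩⟩
    intro D hD _
    exact Set.subset_empty_iff.1 hD
  · have hne : (⋃₀ S).Nonempty := Set.nonempty_iff_ne_empty.2 hV
    have hnea : Nonempty α := ⟨hne.choose⟩
    obtain ⟨v, hv⟩ : ∃ v : ℕ → α, ⋃₀ S ⊆ Set.range v :=
      Set.countable_iff_exists_subset_range.1 hVc
    set Inv : Set (Set α) × Set (Set α) → Prop := fun P =>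
      P.1 ⊆ S ∧ P.2 ⊆ S ∧ ⋃₀ (P.1 ∪ P.2) = ⋃₀ S ∧
        (∀ f ∈ P.1, ∃ p ∈ f, ∀ s ∈ P.1 ∪ P.2, s ≠ f → p ∉ s) with hInv
    have hedge_sub : ∀ s ∈ S, s ⊆ ⋃₀ S := fun s hs z hz => ⟨s, hs, hz⟩
    -- the step
    have hstep : ∀ (n : ℕ) (t : {P // Inv P}), ∃ t' : {P // Inv P},
        t.1.1 ⊆ t'.1.1 ∧ t'.1.1 ∪ t'.1.2 ⊆ t.1.1 ∪ t.1.2 ∧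
          (v n ∈ ⋃₀ S → v n ∈ ⋃₀ t'.1.1) := by
      rintro n ⟨⟨F, R⟩, hF, hRS, hI1, hI2⟩
      by_cases hcov : v n ∈ ⋃₀ F
      · exact ⟨⟨(F, R), hF, hRS, hI1, hI2⟩, subset_rfl, subset_rfl, fun _ => hcov⟩
      by_cases hvV : v n ∈ ⋃₀ S
      case neg =>
        exact ⟨⟨(F, R), hF, hRS, hI1, hI2⟩, subset_rfl, subset_rfl, fun h => absurd h hvV⟩
      -- move case
      have hwR : ∃ r ∈ R, v n ∈ r := by
        have : v n ∈ ⋃₀ (F ∪ R) := hI1.symm ▸ hvV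
        rw [Set.sUnion_union, Set.mem_union] at this
        rcases this with h | h
        · exact absurd h hcov
        · exact h
      obtain ⟨e, heR, hwe, x, hxe, hxF, hlegal⟩ :=
        exists_move E S hsub h3 F R hRS (v n) hwR hcov
      refine ⟨⟨(F ∪ {e}, {r | r ∈ R ∧ x ∉ r ∧ r ≠ e}), ?_, ?_, ?_, ?_⟩, ?_, ?_, ?_⟩
      · exact Set.union_subset hF (by intro s hs; rw [Set.mem_singleton_iff.1 hs]; exact hRS heR)
      · intro r hr; exact hRS hr.1
      · -- coverage invariant
        apply Set.Subset.antisymm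
        · intro z hz
          obtain ⟨s, hs, hzs⟩ := hz
          rcases hs with hs | hs
          · rcases hs with hs | hs
            · exact hedge_sub s (hF hs) hzs
            · exact hedge_sub s (hRS (by rw [Set.mem_singleton_iff.1 hs]; exact heR)) hzs
          · exact hedge_sub s (hRS hs.1) hzs
        · intro z hz
          have hz' : z ∈ ⋃₀ (F ∪ R) := hI1.symm ▸ hz
          rw [Set.sUnion_union, Set.mem_union] at hz'
          rcases hz' with h | h
          · obtain ⟨s, hs, hzs⟩ := h
            exact ⟨s, Or.inl (Or.inl hs), hzs⟩
          · obtain ⟨r, hrR, hzr⟩ := h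
            rcases eq_or_ne r e with rfl | hrne
            · exact ⟨r, Or.inl (Or.inr rfl), hzr⟩
            by_cases hxr : x ∈ r
            · -- discarded edge: use legality
              have : z ∈ ⋃₀ {r | r ∈ R ∧ x ∈ r ∧ r ≠ e} := ⟨r, ⟨hrR, hxr, hrne⟩, hzr⟩
              have := hlegal this
              rcases this with h' | h'
              · rcases h' with h' | h'
                · obtain ⟨s, hs, hzs⟩ := h'
                  exact ⟨s, Or.inl (Or.inl hs), hzs⟩
                · exact ⟨e, Or.inl (Or.inr rfl), h'⟩
              · obtain ⟨s, hs, hzs⟩ := h'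
                exact ⟨s, Or.inr hs, hzs⟩
            · exact ⟨r, Or.inr ⟨hrR, hxr, hrne⟩, hzr⟩
      · -- privacy invariant
        intro f hf
        rcases hf with hf | hf
        · obtain ⟨p, hpf, hp⟩ := hI2 f hf
          refine ⟨p, hpf, ?_⟩
          intro s hs hsne
          rcases hs with hs | hs
          · rcases hs with hs | hs
            · exact hp s (Or.inl hs) hsne
            · exact hp s (Or.inr (by rw [Set.mem_singleton_iff.1 hs]; exact heR)) hsne
          · exact hp s (Or.inr hs.1) hsne
        · -- f = e, private point x
          have hfe : f = e := hf
          subst hfe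
          refine ⟨x, hxe, ?_⟩
          intro s hs hsne
          rcases hs with hs | hs
          · rcases hs with hs | hs
            · exact fun hxs => hxF ⟨s, hs, hxs⟩
            · exact absurd hs hsne
          · exact hs.2.1
      · exact Set.subset_union_left
      · -- shrinking
        intro s hs
        rcases hs with hs | hs
        · rcases hs with hs | hs
          · exact Or.inl hs
          · exact Or.inr (by rw [Set.mem_singleton_iff.1 hs]; exact heR)
        · exact Or.inr hs.1
      · intro _
        exact ⟨e, Or.inr rfl, hwe⟩
    -- initial state
    have hinv0 : Inv (∅, S) := by
      refine ⟨Set.empty_subset S, subset_rfl, by rw [Set.empty_union], ?_⟩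
      intro f hf
      exact absurd hf (Set.notMem_empty f)
    let t0 : {P // Inv P} := ⟨(∅, S), hinv0⟩
    let seq : ℕ → {P // Inv P} := fun n => Nat.rec t0 (fun n t => (hstep n t).choose) n
    have hseq : ∀ n, seq (n+1) = (hstep n (seq n)).choose := fun n => rfl
    have hspec : ∀ n, (seq n).1.1 ⊆ (seq (n+1)).1.1 ∧
        (seq (n+1)).1.1 ∪ (seq (n+1)).1.2 ⊆ (seq n).1.1 ∪ (seq n).1.2 ∧
        (v n ∈ ⋃₀ S → v n ∈ ⋃₀ (seq (n+1)).1.1) := by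
      intro n
      rw [hseq n]
      exact (hstep n (seq n)).choose_spec
    have hmono : ∀ m n, m ≤ n → (seq m).1.1 ⊆ (seq n).1.1 := by
      intro m n h
      induction n with
      | zero => rw [Nat.le_zero.1 h]
      | succ n ih =>
        rcases eq_or_lt_of_le h with rfl | h'
        · exact subset_rfl
        · exact (ih (Nat.lt_succ_iff.1 h')).trans (hspec n).1
    have hdown : ∀ m n, m ≤ n →
        (seq n).1.1 ∪ (seq n).1.2 ⊆ (seq m).1.1 ∪ (seq m).1.2 := by
      intro m n h
      induction n with
      | zero => rw [Nat.le_zero.1 h]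
      | succ n ih =>
        rcases eq_or_lt_of_le h with rfl | h'
        · exact subset_rfl
        · exact (hspec n).2.1.trans (ih (Nat.lt_succ_iff.1 h'))
    set C : Set (Set α) := {s | ∃ n, s ∈ (seq n).1.1} with hC
    have hCS : C ⊆ S := by
      rintro s ⟨n, hs⟩
      exact (seq n).2.1 hs
    have hCcover : ⋃₀ C = ⋃₀ S := by
      apply Set.Subset.antisymm
      · rintro z ⟨s, hs, hzs⟩
        exact hedge_sub s (hCS hs) hzs
      · intro z hz
        obtain ⟨n, hn⟩ := hv hz
        have := (hspec n).2.2 (by rw [hn]; exact hz)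
        obtain ⟨s, hs, hzs⟩ := this
        exact ⟨s, ⟨n+1, hs⟩, hn ▸ hzs⟩
    refine ⟨C, ⟨hCS, hCcover⟩, ?_⟩
    intro D hDC hDcov
    apply Set.Subset.antisymm hDC
    rintro f ⟨m, hfm⟩
    obtain ⟨p, hpf, hp⟩ := (seq m).2.2.2.2 f hfm
    have hpV : p ∈ ⋃₀ S := hedge_sub f ((seq m).2.1 hfm) hpf
    have hpD : p ∈ ⋃₀ D := hDcov.2.symm ▸ hpV
    obtain ⟨d, hdD, hpd⟩ := hpD
    obtain ⟨k, hdk⟩ := hDC hdD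
    have hdFR : d ∈ (seq m).1.1 ∪ (seq m).1.2 := by
      rcases le_total k m with h | h
      · exact Or.inl (hmono k m h hdk)
      · exact hdown m k h (Or.inl hdk)
    rcases eq_or_ne d f with rfl | hdf
    · exact hdD
    · exact absurd hpd (hp d hdFR hdf)

end Main

section Easy
variable {α : Type*}

lemma one_to_two (E : Set (Set α))
    (h1 : ∀ S, IsSubhypergraph E S → S.Countable → (⋃₀ S).Countable →
      ∃ C, IsMinimalCover S C) :
    ∀ S, IsSubhypergraph E S → S.Nonempty → HasMaximalEdge S := by
  classical
  intro S hsub hSne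
  by_contra hmax
  rw [HasMaximalEdge] at hmax
  push_neg at hmax
  -- hmax : ∀ M ∈ S, ∃ T ∈ S, M ⊆ T ∧ T ≠ M
  obtain ⟨s0, hs0⟩ := hSne
  have hstep : ∀ t : {t // t ∈ S}, ∃ t' : {t // t ∈ S}, t.1 ⊆ t'.1 ∧ t'.1 ≠ t.1 := by
    rintro ⟨t, ht⟩
    obtain ⟨T, hT, hsub', hne⟩ := hmax t ht
    exact ⟨⟨T, hT⟩, hsub', hne⟩
  let next : {t // t ∈ S} → {t // t ∈ S} := fun t => (hstep t).choose
  let seq : ℕ → {t // t ∈ S} := fun n => next^[n] ⟨s0, hs0⟩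
  have hseq : ∀ n, seq (n+1) = next (seq n) := fun n =>
    Function.iterate_succ_apply' next n ⟨s0, hs0⟩
  set t : ℕ → Set α := fun n => (seq n).1 with htdef
  have htS : ∀ n, t n ∈ S := fun n => (seq n).2
  have hrel : ∀ n, t n ⊆ t (n+1) ∧ t (n+1) ≠ t n := by
    intro n
    have h := (hstep (seq n)).choose_spec
    have he : seq (n+1) = (hstep (seq n)).choose := hseq n
    constructor
    · intro z hz
      show z ∈ (seq (n+1)).1
      rw [he]; exact h.1 hz
    · show (seq (n+1)).1 ≠ (seq n).1
      rw [he]; exact h.2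
  have hmono : ∀ m n, m ≤ n → t m ⊆ t n := by
    intro m n h
    induction n with
    | zero => rw [Nat.le_zero.1 h]
    | succ n ih =>
      rcases eq_or_lt_of_le h with rfl | h'
      · exact subset_rfl
      · exact (ih (Nat.lt_succ_iff.1 h')).trans (hrel n).1
  have hx : ∀ n, ∃ z, z ∈ t (n+1) ∧ z ∉ t n := by
    intro n
    have hss : t n ⊂ t (n+1) := HasSubset.Subset.ssubset_of_ne (hrel n).1 ((hrel n).2).symm
    obtain ⟨z, hz1, hz2⟩ := Set.exists_of_ssubset hss
    exact ⟨z, hz1, hz2⟩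
  choose x hx1 hx2 using hx
  have hxt : ∀ k n, x k ∈ t n ↔ k < n := by
    intro k n
    constructor
    · intro h
      by_contra hk
      exact hx2 k (hmono n k (Nat.le_of_not_lt hk) h)
    · intro h
      exact hmono (k+1) n (Nat.succ_le_of_lt h) (hx1 k)
  -- underlying edges
  obtain ⟨G, hGE, A₀, hA₀, hSeq⟩ := hsub
  have hch : ∀ n, ∃ g ∈ G, g ∩ A₀ = t n := by
    intro n
    have := htS n
    rw [hSeq] at this
    obtain ⟨g, hg, hge⟩ := this
    exact ⟨g, hg, hge⟩
  choose g hgG hge using hch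
  have hxA : ∀ k, x k ∈ A₀ := by
    intro k
    have := hx1 k
    rw [← hge (k+1)] at this
    exact this.2
  have hxg : ∀ k n, x k ∈ g n ↔ k < n := by
    intro k n
    rw [← hxt k n, ← hge n]
    exact ⟨fun h => ⟨h, hxA k⟩, fun h => h.1⟩
  -- the ω-like subhypergraph
  set S₁ : Set (Set α) := (fun T => T ∩ Set.range x) '' Set.range g with hS₁
  have hsub₁ : IsSubhypergraph E S₁ := by
    refine ⟨Set.range g, ?_, Set.range x, ?_, rfl⟩
    · rintro _ ⟨n, rfl⟩; exact hGE (hgG n)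
    · rintro _ ⟨k, rfl⟩
      exact ⟨g (k+1), ⟨k+1, rfl⟩, (hxg k (k+1)).2 (Nat.lt_succ_self k)⟩
  have hQ : ∀ n, g n ∩ Set.range x = x '' Set.Iio n := by
    intro n
    ext z
    constructor
    · rintro ⟨hzg, k, rfl⟩
      exact ⟨k, (hxg k n).1 hzg, rfl⟩
    · rintro ⟨k, hk, rfl⟩
      exact ⟨(hxg k n).2 hk, ⟨k, rfl⟩⟩
  have hxinj : ∀ a b : ℕ, a < b → x a ≠ x b := by
    intro a b h heq
    have h1 : x a ∈ g b := (hxg a b).2 h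
    rw [heq] at h1
    exact absurd ((hxg b b).1 h1) (lt_irrefl b)
  have hS₁c : S₁.Countable := (Set.countable_range g).image _
  have hU₁ : ⋃₀ S₁ = Set.range x := by
    apply Set.Subset.antisymm
    · rintro z ⟨_, ⟨_, ⟨n, rfl⟩, rfl⟩, hz⟩
      exact hz.2
    · rintro _ ⟨k, rfl⟩
      exact ⟨g (k+1) ∩ Set.range x, ⟨g (k+1), ⟨k+1, rfl⟩, rfl⟩,
        ⟨(hxg k (k+1)).2 (Nat.lt_succ_self k), ⟨k, rfl⟩⟩⟩
  have hU₁c : (⋃₀ S₁).Countable := by rw [hU₁]; exact Set.countable_range x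
  obtain ⟨C, ⟨hCsub, hCun⟩, hCmin⟩ := h1 S₁ hsub₁ hS₁c hU₁c
  -- every member of C is some x '' Iio n
  have hCform : ∀ c ∈ C, ∃ n, c = x '' Set.Iio n := by
    intro c hc
    obtain ⟨_, ⟨n, rfl⟩, rfl⟩ := hCsub hc
    exact ⟨n, hQ n⟩
  have hmemQ : ∀ k n, x k ∈ x '' Set.Iio n ↔ k < n := by
    intro k n
    constructor
    · rintro ⟨j, hj, hxe⟩
      rcases lt_trichotomy j k with h | rfl | h
      · exact absurd hxe (hxinj j k h)
      · exact hj
      · exact absurd hxe.symm (hxinj k j h)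
    · intro h; exact ⟨k, h, rfl⟩
  have hbig : ∀ k, ∃ m, k < m ∧ x '' Set.Iio m ∈ C := by
    intro k
    have : x k ∈ ⋃₀ C := by
      rw [hCun, hU₁]; exact ⟨k, rfl⟩
    obtain ⟨c, hcC, hxc⟩ := this
    obtain ⟨m, rfl⟩ := hCform c hcC
    exact ⟨m, (hmemQ k m).1 hxc, hcC⟩
  -- pick an element of C and drop it
  obtain ⟨m0, _, hm0⟩ := hbig 0
  set c : Set α := x '' Set.Iio m0 with hc
  have hQinj : ∀ a b : ℕ, x '' Set.Iio a = x '' Set.Iio b → a = b := by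
    intro a b hab
    by_contra hne
    rcases Nat.lt_or_ge a b with h | h
    · have : x a ∈ x '' Set.Iio a := hab ▸ (hmemQ a b).2 h
      exact absurd ((hmemQ a a).1 this) (lt_irrefl a)
    · have h' : b < a := lt_of_le_of_ne h (Ne.symm hne)
      have : x b ∈ x '' Set.Iio b := hab ▸ (hmemQ b a).2 h'
      exact absurd ((hmemQ b b).1 this) (lt_irrefl b)
  have hDcov : IsCover S₁ (C \ {c}) := by
    refine ⟨(Set.diff_subset).trans hCsub, ?_⟩
    apply Set.Subset.antisymm
    · rintro z ⟨s, hs, hzs⟩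
      rw [← hCun]
      exact ⟨s, hs.1, hzs⟩
    · intro z hz
      rw [hU₁] at hz
      obtain ⟨k, rfl⟩ := hz
      obtain ⟨m, hm1, hm2⟩ := hbig (max k m0)
      refine ⟨x '' Set.Iio m, ⟨hm2, ?_⟩, (hmemQ k m).2 (lt_of_le_of_lt (le_max_left k m0) hm1)⟩
      intro hmem
      have h1 : m = m0 := hQinj m m0 (Set.mem_singleton_iff.1 hmem)
      have h2 : m0 < m := lt_of_le_of_lt (le_max_right k m0) hm1
      omega
  have heq := hCmin (C \ {c}) Set.diff_subset hDcov
  have hcd : c ∈ C \ {c} := by rw [heq]; exact hm0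
  exact hcd.2 rfl

lemma two_to_three (E : Set (Set α))
    (h2 : ∀ S, IsSubhypergraph E S → S.Nonempty → HasMaximalEdge S) :
    ∀ S, IsSubhypergraph E S → ¬ IsoToOmega S := by
  intro S hsub hiso
  obtain ⟨f, hfinj, hfr, hfe⟩ := hiso
  have hSne : S.Nonempty := ⟨f '' Set.Iio 0, by rw [hfe]; exact ⟨0, rfl⟩⟩
  obtain ⟨M, hM, hmax⟩ := h2 S hsub hSne
  rw [hfe] at hM
  obtain ⟨n, rfl⟩ := hM
  have hT : f '' Set.Iio (n+1) ∈ S := by rw [hfe]; exact ⟨n+1, rfl⟩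
  have hsub' : f '' Set.Iio n ⊆ f '' Set.Iio (n+1) :=
    Set.image_mono (fun j hj => lt_trans hj (Nat.lt_succ_self n))
  have heq := hmax _ hT hsub'
  have : f n ∈ f '' Set.Iio n := by
    rw [← heq]; exact ⟨n, Nat.lt_succ_self n, rfl⟩
  obtain ⟨j, hj, hje⟩ := this
  exact absurd (hfinj hje) (Nat.ne_of_lt hj)

end Easy


theorem stmt_4 {α : Type*} (E : Set (Set α)) :
    List.TFAE
      [ (∀ S, IsSubhypergraph E S → S.Countable → (⋃₀ S).Countable →
          ∃ C, IsMinimalCover S C),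
        (∀ S, IsSubhypergraph E S → S.Nonempty → HasMaximalEdge S),
        (∀ S, IsSubhypergraph E S → ¬ IsoToOmega S) ] := by
  tfae_have 1 → 2 := fun h1 => one_to_two E h1
  tfae_have 2 → 3 := fun h2 => two_to_three E h2
  tfae_have 3 → 1 := fun h3 S hsub _ hVc => three_to_one E h3 S hsub hVc
  tfae_finish
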